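/- Let R, R_d : ℝ → ℝ^{3×3} be differentiable curves taking values in SO(3), and let Ω, Ω_d : ℝ → ℝ³ satisfy the kinematic equations R'(t) = R(t)·Ω̂(t) and R_d'(t) = R_d(t)·Ω̂_d(t) for all t. Define e_R(t) = (1/2)(R_d(t)ᵀR(t) − R(t)ᵀR_d(t))∨ and e_Ω(t) = Ω(t) − R(t)ᵀR_d(t)Ω_d(t). Then the function Ψ(t) = (1/2)tr(I − R_d(t)ᵀR(t)) is differentiable with Ψ'(t) = ⟨e_R(t), e_Ω(t)⟩ for all t. -/

import Mathlib

open Matrix BigOperators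

/-- The Euclidean inner product on ℝ³. -/
noncomputable def dot3 (a b : Fin 3 → ℝ) : ℝ := ∑ i, a i * b i

/-- The hat map: `x̂ y = x × y`. -/
def hat (x : Fin 3 → ℝ) : Matrix (Fin 3) (Fin 3) ℝ :=
  !![0, -x 2, x 1; x 2, 0, -x 0; -x 1, x 0, 0]

/-- The vee map: inverse of the hat map, `S∨ = (S₃₂, S₁₃, S₂₁)`. -/
def vee (S : Matrix (Fin 3) (Fin 3) ℝ) : Fin 3 → ℝ := ![S 2 1, S 0 2, S 1 0]

/-- Key algebraic fact: for `A ∈ SO(3)`, the axis vector `vee (A - Aᵀ)` is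
fixed by `A`. -/
lemma so3_fixes_axis (A : Matrix (Fin 3) (Fin 3) ℝ) (h1 : Aᵀ * A = 1)
    (hd : A.det = 1) : ∀ i, (A *ᵥ vee (A - Aᵀ)) i = vee (A - Aᵀ) i := by
  have e : ∀ k m, ∑ n : Fin 3, A n k * A n m
      = (1 : Matrix (Fin 3) (Fin 3) ℝ) k m := by
    intro k m
    have := congrFun (congrFun h1 k) m
    simpa [Matrix.mul_apply, Matrix.transpose_apply] using this
  have e00 := e 0 0; have e01 := e 0 1; have e02 := e 0 2
  have e10 := e 1 0; have e11 := e 1 1; have e12 := e 1 2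
  have e20 := e 2 0; have e21 := e 2 1; have e22 := e 2 2
  simp [Matrix.one_apply, Fin.sum_univ_three] at e00 e01 e02 e10 e11 e12 e20 e21 e22
  rw [Matrix.det_fin_three] at hd
  intro i
  fin_cases i <;>
    simp [Matrix.mulVec, dotProduct, vee, Matrix.sub_apply,
      Matrix.transpose_apply, Fin.sum_univ_three]
  · linear_combination (A 2 1 - A 1 2) * hd + (- A 0 1 * A 0 2 + A 0 2 * A 0 1) * e00 + (- A 0 1 * A 1 2 + A 0 2 * A 1 1) * e01 + (- A 0 1 * A 2 2 + A 0 2 * A 2 1) * e02 + (A 0 0 * A 0 2 - A 0 2 * A 0 0) * e10 + (A 0 0 * A 1 2 - A 0 2 * A 1 0) * e11 + (A 0 0 * A 2 2 - A 0 2 * A 2 0) * e12 + (- A 0 0 * A 0 1 + A 0 1 * A 0 0) * e20 + (- A 0 0 * A 1 1 + A 0 1 * A 1 0) * e21 + (- A 0 0 * A 2 1 + A 0 1 * A 2 0) * e22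
  · linear_combination (A 0 2 - A 2 0) * hd + (- A 1 1 * A 0 2 + A 1 2 * A 0 1) * e00 + (- A 1 1 * A 1 2 + A 1 2 * A 1 1) * e01 + (- A 1 1 * A 2 2 + A 1 2 * A 2 1) * e02 + (A 1 0 * A 0 2 - A 1 2 * A 0 0) * e10 + (A 1 0 * A 1 2 - A 1 2 * A 1 0) * e11 + (A 1 0 * A 2 2 - A 1 2 * A 2 0) * e12 + (- A 1 0 * A 0 1 + A 1 1 * A 0 0) * e20 + (- A 1 0 * A 1 1 + A 1 1 * A 1 0) * e21 + (- A 1 0 * A 2 1 + A 1 1 * A 2 0) * e22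
  · linear_combination (A 1 0 - A 0 1) * hd + (- A 2 1 * A 0 2 + A 2 2 * A 0 1) * e00 + (- A 2 1 * A 1 2 + A 2 2 * A 1 1) * e01 + (- A 2 1 * A 2 2 + A 2 2 * A 2 1) * e02 + (A 2 0 * A 0 2 - A 2 2 * A 0 0) * e10 + (A 2 0 * A 1 2 - A 2 2 * A 1 0) * e11 + (A 2 0 * A 2 2 - A 2 2 * A 2 0) * e12 + (- A 2 0 * A 0 1 + A 2 1 * A 0 0) * e20 + (- A 2 0 * A 1 1 + A 2 1 * A 1 0) * e21 + (- A 2 0 * A 2 1 + A 2 1 * A 2 0) * e22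

/-- Along curves `R, R_d` in SO(3) with kinematics `Ṙ = RΩ̂`,
`Ṙ_d = R_dΩ̂_d`, the error function `Ψ(t) = (1/2)tr(I − R_dᵀR)` satisfies
`Ψ'(t) = ⟨e_R(t), e_Ω(t)⟩`. -/
theorem attitude_error_function_derivative
    (R Rd : ℝ → Matrix (Fin 3) (Fin 3) ℝ) (Ω Ωd : ℝ → Fin 3 → ℝ)
    (hRso : ∀ t, (R t)ᵀ * R t = 1 ∧ (R t).det = 1)
    (hRdso : ∀ t, (Rd t)ᵀ * Rd t = 1 ∧ (Rd t).det = 1)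
    (hR : ∀ t, ∀ i j, HasDerivAt (fun s => R s i j) ((R t * hat (Ω t)) i j) t)
    (hRd : ∀ t, ∀ i j, HasDerivAt (fun s => Rd s i j) ((Rd t * hat (Ωd t)) i j) t)
    (eR : ℝ → Fin 3 → ℝ)
    (heR : ∀ t, eR t = vee ((1 / 2 : ℝ) • ((Rd t)ᵀ * R t - (R t)ᵀ * Rd t)))
    (eΩ : ℝ → Fin 3 → ℝ)
    (heΩ : ∀ t, eΩ t = Ω t - ((R t)ᵀ * Rd t) *ᵥ Ωd t)
    (Ψ : ℝ → ℝ)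
    (hΨ : ∀ t, Ψ t = (1 / 2) * Matrix.trace ((1 : Matrix (Fin 3) (Fin 3) ℝ) - (Rd t)ᵀ * R t)) :
    ∀ t, HasDerivAt Ψ (dot3 (eR t) (eΩ t)) t := by
  intro t
  obtain ⟨hR1, hR2⟩ := hRso t
  obtain ⟨hRd1, hRd2⟩ := hRdso t
  have hRd1' : Rd t * (Rd t)ᵀ = 1 := mul_eq_one_comm.mp hRd1
  have h1 : ((Rd t)ᵀ * R t)ᵀ * ((Rd t)ᵀ * R t) = 1 := by
    rw [Matrix.transpose_mul, Matrix.transpose_transpose, Matrix.mul_assoc,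
      ← Matrix.mul_assoc (Rd t), hRd1', Matrix.one_mul, hR1]
  have hd : ((Rd t)ᵀ * R t).det = 1 := by
    rw [Matrix.det_mul, Matrix.det_transpose, hR2, hRd2, mul_one]
  have hk := so3_fixes_axis _ h1 hd
  have hk0 := hk 0; have hk1 := hk 1; have hk2 := hk 2
  simp [Matrix.mulVec, dotProduct, vee, Matrix.sub_apply,
    Matrix.transpose_apply, Matrix.mul_apply, Fin.sum_univ_three] at hk0 hk1 hk2
  have hfun : Ψ = fun s => 1 / 2 *
      (3 - ∑ j : Fin 3, ∑ i : Fin 3, Rd s i j * R s i j) := by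
    funext s
    rw [hΨ s]
    simp [Matrix.trace, Matrix.diag, Matrix.sub_apply, Matrix.mul_apply,
      Matrix.one_apply, Fin.sum_univ_three, Matrix.transpose_apply]
  have hder0 : HasDerivAt
      (fun s => ∑ j : Fin 3, ∑ i : Fin 3, Rd s i j * R s i j)
      (∑ j : Fin 3, ∑ i : Fin 3, ((Rd t * hat (Ωd t)) i j * R t i j
        + Rd t i j * (R t * hat (Ω t)) i j)) t := by
    apply HasDerivAt.fun_sum
    intro j _
    apply HasDerivAt.fun_sum
    intro i _
    exact (hRd t i j).mul (hR t i j)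
  have hder := (hder0.const_sub 3).const_mul (1 / 2 : ℝ)
  rw [hfun]
  refine hder.congr_deriv (Eq.symm ?_)
  rw [heR t, heΩ t]
  simp [dot3, vee, Matrix.mulVec, dotProduct, Matrix.smul_apply,
    Matrix.sub_apply, Matrix.transpose_apply, Matrix.mul_apply, Pi.sub_apply,
    Fin.sum_univ_three, hat, Matrix.of_apply]
  linear_combination (-(Ωd t 0) / 2) * hk0 + (-(Ωd t 1) / 2) * hk1
    + (-(Ωd t 2) / 2) * hk2
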